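/- Let a and b be coprime positive integers. Then every (a,b)-Dyck path D satisfies area(D) ≤ (a−1)(b−1)/2, and there exists an (a,b)-Dyck path attaining this bound; that is, the maximum of area(D) over all (a,b)-Dyck paths D equals (a−1)(b−1)/2. -/

import Mathlib

open Finset

/-- A word over `{N, E}`, encoded as a `List Bool` with `true` = N (north step) and
`false` = E (east step), is an `(a,b)`-Dyck path if it has exactly `a` norths and
`b` easts and every prefix with `i` norths and `j` easts satisfies `b*i ≥ a*j`. -/
def IsDyckWord (a b : ℕ) (w : List Bool) : Prop :=
  w.count true = a ∧ w.count false = b ∧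
    ∀ p : List Bool, p <+: w → a * p.count false ≤ b * p.count true

/-- The area of an `(a,b)`-Dyck path: the number of unit lattice cells (recorded by
their lower-left corner `c = (x, y)`) whose interior lies below the path — i.e. the
path reaches height `y+1` after at most `x` east steps — and strictly above the line
`y = (a/b)·x` — i.e. `a·(x+1) ≤ b·y`. -/
noncomputable def dyckArea (a b : ℕ) (w : List Bool) : ℕ :=
  {c : ℕ × ℕ |
    (∃ p : List Bool, p <+: w ∧ p.count false ≤ c.1 ∧ c.2 + 1 ≤ p.count true) ∧
    a * (c.1 + 1) ≤ b * c.2}.ncard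

lemma floor_pair {a b y z : ℕ} (ha : 0 < a) (hab : Nat.Coprime a b)
    (hy : 0 < y) (hya : y < a) (hyz : y + z = a) :
    b * y / a + b * z / a = b - 1 := by
  have h1 := Nat.div_add_mod (b * y) a
  have h2 := Nat.div_add_mod (b * z) a
  have hr1 : b * y % a ≠ 0 := by
    intro h
    have hd : a ∣ b * y := Nat.dvd_of_mod_eq_zero h
    have : a ∣ y := Nat.Coprime.dvd_of_dvd_mul_left hab hd
    have := Nat.le_of_dvd hy this
    omega
  have hr1' : b * y % a < a := Nat.mod_lt _ ha
  have hr2' : b * z % a < a := Nat.mod_lt _ ha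
  have hsum : b * y + b * z = a * b := by rw [← Nat.mul_add, hyz]; ring
  have key : a * (b * y / a + b * z / a) + (b * y % a + b * z % a) = a * b := by
    rw [Nat.mul_add]; omega
  set Q := b * y / a + b * z / a with hQ
  set s := b * y % a + b * z % a with hs
  clear_value Q s
  have hQb : a * Q < a * b := by omega
  have hQb' : Q < b := lt_of_mul_lt_mul_left hQb (Nat.zero_le a)
  have h3 : a * (b - Q) = s := by rw [Nat.mul_sub]; omega
  have hslt : s < a * 2 := by omega
  have h6 : a * (b - Q) < a * 2 := h3 ▸ hslt
  have h4 : b - Q < 2 := lt_of_mul_lt_mul_left h6 (Nat.zero_le a)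
  omega

lemma sum_floor (a b : ℕ) (ha : 0 < a) (hab : Nat.Coprime a b) :
    2 * ∑ y ∈ range a, b * y / a = (a - 1) * (b - 1) := by
  obtain ⟨n, rfl⟩ : ∃ n, a = n + 1 := ⟨a - 1, by omega⟩
  rw [Finset.sum_range_succ']
  simp only [Nat.mul_zero, Nat.zero_div, add_zero]
  have hrefl := Finset.sum_range_reflect (fun j => b * (j + 1) / (n + 1)) n
  have hcongr : ∑ j ∈ range n, b * (n - 1 - j + 1) / (n + 1)
      = ∑ j ∈ range n, b * (n - j) / (n + 1) := by
    apply Finset.sum_congr rfl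
    intro j hj
    rw [Finset.mem_range] at hj
    congr 3
    omega
  have h2 : 2 * ∑ j ∈ range n, b * (j + 1) / (n + 1)
      = ∑ j ∈ range n, (b * (j + 1) / (n + 1) + b * (n - j) / (n + 1)) := by
    rw [Finset.sum_add_distrib, Nat.two_mul, ← hcongr, hrefl]
  rw [h2]
  have h3 : ∑ j ∈ range n, (b * (j + 1) / (n + 1) + b * (n - j) / (n + 1))
      = ∑ _j ∈ range n, (b - 1) := by
    apply Finset.sum_congr rfl
    intro j hj
    rw [Finset.mem_range] at hj
    exact floor_pair ha hab (Nat.succ_pos j) (by omega) (by omega)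
  rw [h3, Finset.sum_const, Finset.card_range, smul_eq_mul]
  simp

/-- for coprime positive integers `a, b`, every `(a,b)`-Dyck path `D`
satisfies `area(D) ≤ (a−1)(b−1)/2` and some `(a,b)`-Dyck path attains the bound,
i.e. the maximum of the area equals `(a−1)(b−1)/2`. -/
theorem stmt8 (a b : ℕ) (ha : 0 < a) (hb : 0 < b) (hab : Nat.Coprime a b) :
    (∀ w : List Bool, IsDyckWord a b w →
      2 * dyckArea a b w ≤ (a - 1) * (b - 1)) ∧
    (∃ w : List Bool, IsDyckWord a b w ∧
      2 * dyckArea a b w = (a - 1) * (b - 1)) := by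
  classical
  set T : Finset (ℕ × ℕ) :=
    (range a).biUnion (fun y => (range (b * y / a)).image fun x => (x, y)) with hT
  have hmemT : ∀ x y : ℕ, (x, y) ∈ T ↔ a * (x + 1) ≤ b * y ∧ y + 1 ≤ a := by
    intro x y
    rw [hT]
    simp only [Finset.mem_biUnion, Finset.mem_image, Finset.mem_range, Prod.mk.injEq]
    constructor
    · rintro ⟨y', hy', x', hx', h1, h2⟩
      have hx1 : x' + 1 ≤ b * y' / a := hx'
      have hle : (x' + 1) * a ≤ b * y' := (Nat.le_div_iff_mul_le ha).mp hx1
      constructor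
      · rw [← h1, ← h2]
        calc a * (x' + 1) = (x' + 1) * a := mul_comm _ _
          _ ≤ b * y' := hle
      · omega
    · rintro ⟨h1, h2⟩
      refine ⟨y, h2, x, ?_, rfl, rfl⟩
      have : x + 1 ≤ b * y / a := (Nat.le_div_iff_mul_le ha).mpr (by rw [mul_comm]; exact h1)
      omega
  have hcard : T.card = ∑ y ∈ range a, b * y / a := by
    rw [hT, Finset.card_biUnion]
    · apply Finset.sum_congr rfl
      intro y _
      rw [Finset.card_image_of_injective _ (fun u v huv => by simpa using huv),
        Finset.card_range]
    · intro y1 _ y2 _ hne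
      rw [Function.onFun, Finset.disjoint_left]
      rintro ⟨x, y⟩ h1 h2
      simp only [Finset.mem_image, Finset.mem_range, Prod.mk.injEq] at h1 h2
      obtain ⟨x1, -, -, rfl⟩ := h1
      obtain ⟨x2, -, -, h⟩ := h2
      exact hne h.symm
  have hsub : ∀ w : List Bool, w.count true = a →
      {c : ℕ × ℕ |
        (∃ p : List Bool, p <+: w ∧ p.count false ≤ c.1 ∧ c.2 + 1 ≤ p.count true) ∧
        a * (c.1 + 1) ≤ b * c.2} ⊆ ↑T := by
    rintro w hw ⟨x, y⟩ ⟨⟨p, hp, -, hpt⟩, hxy⟩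
    refine Finset.mem_coe.mpr ((hmemT x y).mpr ⟨hxy, le_trans hpt ?_⟩)
    rw [← hw]
    exact hp.sublist.count_le true
  have hbound : 2 * T.card = (a - 1) * (b - 1) := by rw [hcard]; exact sum_floor a b ha hab
  constructor
  · intro w hw
    have hle := Set.ncard_le_ncard (hsub w hw.1) T.finite_toSet
    rw [Set.ncard_coe_finset] at hle
    unfold dyckArea
    omega
  · refine ⟨List.replicate a true ++ List.replicate b false, ⟨?_, ?_, ?_⟩, ?_⟩
    · simp [List.count_replicate]
    · simp [List.count_replicate]
    · intro p hp
      obtain ⟨n, rfl⟩ : ∃ n, p = (List.replicate a true ++ List.replicate b false).take n :=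
        ⟨p.length, List.prefix_iff_eq_take.mp hp⟩
      rw [List.take_append, List.take_replicate, List.take_replicate,
        List.length_replicate]
      have e1 : (List.replicate (min n a) true ++
          List.replicate (min (n - a) b) false).count true = min n a := by
        simp [List.count_replicate]
      have e2 : (List.replicate (min n a) true ++
          List.replicate (min (n - a) b) false).count false = min (n - a) b := by
        simp [List.count_replicate]
      rw [e1, e2]
      rcases le_or_gt n a with h | h
      · have hna : n - a = 0 := by omega
        simp [hna]
      · have hmin : min n a = a := by omega
        rw [hmin]
        calc a * min (n - a) b ≤ a * b := Nat.mul_le_mul_left a (min_le_right _ _)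
          _ = b * a := mul_comm _ _
    · have hset : {c : ℕ × ℕ |
          (∃ p : List Bool, p <+: List.replicate a true ++ List.replicate b false ∧
            p.count false ≤ c.1 ∧ c.2 + 1 ≤ p.count true) ∧
          a * (c.1 + 1) ≤ b * c.2} = ↑T := by
        apply Set.Subset.antisymm
        · exact hsub _ (by simp [List.count_replicate])
        · rintro ⟨x, y⟩ hxy
          rw [Finset.mem_coe, hmemT] at hxy
          refine ⟨⟨List.replicate a true, ⟨List.replicate b false, rfl⟩, ?_, ?_⟩, hxy.1⟩
          · simp [List.count_replicate]
          · have : (List.replicate a true).count true = a := by simp [List.count_replicate]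
            rw [this]; exact hxy.2
      unfold dyckArea
      rw [hset, Set.ncard_coe_finset]
      exact hbound
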